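/- For any almost Kähler manifold (M,g,J), the identity 2⟨ρ,φ⟩ = ⟨∇_{Ric(X_k)}Ω, ∇_{X^k}Ω⟩ holds, where (X_1,…,X_n) is any local orthonormal frame with summation over repeated indices. -/

import Mathlib

/-!
Framework: an almost Kähler manifold `(M, g, J)` of dimension `n`, presented through
the components, in local orthonormal frames, of its basic geometric data (Mathlib has
no Levi-Civita connection, so the covariant derivatives and the curvature operator are
recorded as data subject to their defining identities).  The tangent spaces are modelled
on `ℝⁿ` with its standard inner product (the metric `g` in an orthonormal frame), the
standard basis playing the role of the local orthonormal frame `(X_1, …, X_n)`.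
-/

noncomputable section

open scoped InnerProductSpace
open MeasureTheory

/-- The model of the tangent spaces: `ℝⁿ` with its standard inner product `g`. -/
abbrev EV (n : ℕ) := EuclideanSpace ℝ (Fin n)

/-- The (local orthonormal) frame `X_k`: the standard basis of `ℝⁿ`. -/
def fr (n : ℕ) (k : Fin n) : EV n := EuclideanSpace.single k 1

/-- An almost Kähler manifold `(M, g, J)` of dimension `n`, recorded through the frame
components of its geometric data: the Riemannian volume measure `vol` (the measure of the
volume form `ω = Ωᵐ/m!`), the almost complex structure `J`, the Riemann curvature operator
`R x X Y Z = (∇²_{X,Y} − ∇²_{Y,X})Z`, the covariant derivatives `covJ x X Y = (∇_X J)Y`,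
`cov2J x X Y Z = (∇²_{X,Y} J)Z`, `covRic x X Y = (∇_X Ric)Y`,
`cov2Ric x X Y Z = (∇²_{X,Y} Ric)Z`, and the divergence operator `div` on vector fields.
The axioms record:  `J² = −1`, `g(JX, JY) = g(X, Y)`, skew-adjointness of `∇_X J` and
`{∇_X J, J} = 0` (derivatives of the previous two), the symmetries and the first Bianchi
identity of `R`, the Ricci identities for `∇²J` and `∇²Ric`, the quasi-Kähler identity
`∇_{JX} J = ∇_X J ∘ J`, the almost Kähler condition `dΩ = 0` in its equivalent form (6),
its consequences `δΩ = 0`, i.e. `(∇_{X_k} J)X^k = 0`, and `(∇²_{X,X_k} J)X^k = 0`. -/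
structure AKManifold (n : ℕ) (M : Type) [TopologicalSpace M] [MeasurableSpace M] where
  vol : Measure M
  J : M → EV n → EV n
  R : M → EV n → EV n → EV n → EV n
  covJ : M → EV n → EV n → EV n
  cov2J : M → EV n → EV n → EV n → EV n
  covRic : M → EV n → EV n → EV n
  cov2Ric : M → EV n → EV n → EV n → EV n
  div : (M → EV n) → M → ℝ
  J_sq : ∀ x X, J x (J x X) = -X
  J_isom : ∀ x X Y, ⟪J x X, J x Y⟫_ℝ = ⟪X, Y⟫_ℝ
  covJ_skew : ∀ x X Y Z, ⟪covJ x X Y, Z⟫_ℝ = -⟪Y, covJ x X Z⟫_ℝ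
  covJ_antiJ : ∀ x X Y, covJ x X (J x Y) + J x (covJ x X Y) = 0
  R_antisym : ∀ x X Y Z, R x Y X Z = - R x X Y Z
  R_skewadj : ∀ x X Y Z W, ⟪R x X Y Z, W⟫_ℝ = -⟪R x X Y W, Z⟫_ℝ
  R_pair : ∀ x X Y Z W, ⟪R x X Y Z, W⟫_ℝ = ⟪R x Z W X, Y⟫_ℝ
  R_bianchi : ∀ x X Y Z, R x X Y Z + R x Y Z X + R x Z X Y = 0
  cov2J_comm : ∀ x X Y Z,
    cov2J x X Y Z - cov2J x Y X Z = R x X Y (J x Z) - J x (R x X Y Z)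
  cov2Ric_comm : ∀ x X Y Z,
    cov2Ric x X Y Z - cov2Ric x Y X Z
      = R x X Y (∑ k, R x Z (fr n k) (fr n k)) - ∑ k, R x (R x X Y Z) (fr n k) (fr n k)
  quasiKahler : ∀ x X Y, covJ x (J x X) Y = covJ x X (J x Y)
  omega_closed : ∀ x X Y Z,
    ⟪covJ x X Y, Z⟫_ℝ + ⟪covJ x Y Z, X⟫_ℝ + ⟪covJ x Z X, Y⟫_ℝ = 0
  omega_coclosed : ∀ x, (∑ k, covJ x (fr n k) (fr n k)) = 0
  cov2J_coclosed : ∀ x X, (∑ k, cov2J x X (fr n k) (fr n k)) = 0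

namespace AKManifold

variable {n : ℕ} {M : Type} [TopologicalSpace M] [MeasurableSpace M] (a : AKManifold n M)

/-- The Ricci endomorphism `Ric(X) = R(X, X_k)X^k`. -/
def Ric (x : M) (X : EV n) : EV n := ∑ k, a.R x X (fr n k) (fr n k)

/-- The star Ricci endomorphism `Ric⋆(X) = R(JX, JX_k)X^k`. -/
def RicStar (x : M) (X : EV n) : EV n := ∑ k, a.R x (a.J x X) (a.J x (fr n k)) (fr n k)

/-- `Ric⁺ = ½(Ric − J∘Ric∘J)`. -/
def RicP (x : M) (X : EV n) : EV n := (2:ℝ)⁻¹ • (a.Ric x X - a.J x (a.Ric x (a.J x X)))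

/-- `Ric⁻ = ½(Ric + J∘Ric∘J)`. -/
def RicM (x : M) (X : EV n) : EV n := (2:ℝ)⁻¹ • (a.Ric x X + a.J x (a.Ric x (a.J x X)))

/-- `Ric⁺⋆ = ½(Ric⋆ − J∘Ric⋆∘J)`. -/
def RicStarP (x : M) (X : EV n) : EV n :=
  (2:ℝ)⁻¹ • (a.RicStar x X - a.J x (a.RicStar x (a.J x X)))

/-- `Ric⁻⋆ = ½(Ric⋆ + J∘Ric⋆∘J)`. -/
def RicStarM (x : M) (X : EV n) : EV n :=
  (2:ℝ)⁻¹ • (a.RicStar x X + a.J x (a.RicStar x (a.J x X)))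

/-- The scalar curvature `S = tr(Ric)`. -/
def S (x : M) : ℝ := ∑ k, ⟪a.Ric x (fr n k), fr n k⟫_ℝ

/-- The star scalar curvature `S⋆ = tr(Ric⋆)`. -/
def SStar (x : M) : ℝ := ∑ k, ⟪a.RicStar x (fr n k), fr n k⟫_ℝ

/-- The scalar product `⟨A, B⟩ = tr(A ∘ B*)` of endomorphisms, in frame components. -/
def einner (A B : EV n → EV n) : ℝ := ∑ k, ⟪A (fr n k), B (fr n k)⟫_ℝ

/-- `|A|² = ⟨A, A⟩` for endomorphisms. -/
def enormSq (A : EV n → EV n) : ℝ := einner A A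

/-- The scalar product `⟨ξ, η⟩ = ½ ξ(X_k, X_l)·η(X^k, X^l)` of `2`-forms. -/
def finner (ξ η : EV n → EV n → ℝ) : ℝ :=
  (2:ℝ)⁻¹ * ∑ k, ∑ l, ξ (fr n k) (fr n l) * η (fr n k) (fr n l)

/-- `|ξ|² = ⟨ξ, ξ⟩` for `2`-forms. -/
def fnormSq (ξ : EV n → EV n → ℝ) : ℝ := finner ξ ξ

/-- The curvature endomorphism `R̃(X,Y) = ¼ [R(X,Y) − R(JX,JY), J] ∘ J`, applied to `Z`. -/
def Rt (x : M) (X Y Z : EV n) : EV n :=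
  (4:ℝ)⁻¹ • ((a.R x X Y (a.J x (a.J x Z)) - a.R x (a.J x X) (a.J x Y) (a.J x (a.J x Z)))
    - a.J x (a.R x X Y (a.J x Z) - a.R x (a.J x X) (a.J x Y) (a.J x Z)))

/-- `R̃⁻(X,Y) = ½(R̃(X,Y) − R̃(JX,Y) ∘ J)`, applied to `Z`. -/
def RtMinus (x : M) (X Y Z : EV n) : EV n :=
  (2:ℝ)⁻¹ • (a.Rt x X Y Z - a.Rt x (a.J x X) Y (a.J x Z))

/-- `|R̃|² = Σ_{k,l} |R̃(X_k, X_l)|²`. -/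
def RtNormSq (x : M) : ℝ := ∑ k, ∑ l, enormSq (a.Rt x (fr n k) (fr n l))

/-- `|R̃⁻|² = Σ_{k,l} |R̃⁻(X_k, X_l)|²`. -/
def RtMinusNormSq (x : M) : ℝ := ∑ k, ∑ l, enormSq (a.RtMinus x (fr n k) (fr n l))

/-- `R̃ic = −¼ ∇_{X_k} J ∘ ∇_{X^k} J`, applied to `X`. -/
def Rict (x : M) (X : EV n) : EV n :=
  -(4:ℝ)⁻¹ • ∑ k, a.covJ x (fr n k) (a.covJ x (fr n k) X)

/-- `R̃ic(X) = R̃(X, X_k)X^k` (equivalently, `R̃ic = −¼ ∇_{X_k} J ∘ ∇_{X^k} J`). -/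
def RictR (x : M) (X : EV n) : EV n := ∑ k, a.Rt x X (fr n k) (fr n k)

/-- The `J`-invariant `2`-form `φ(X,Y) = ½ tr(∇_X J ∘ ∇_{JY} J)`. -/
def phi (x : M) (X Y : EV n) : ℝ :=
  (2:ℝ)⁻¹ * ∑ k, ⟪a.covJ x X (a.covJ x (a.J x Y) (fr n k)), fr n k⟫_ℝ

/-- The Ricci form `ρ(X,Y) = g((J ∘ Ric⁺)X, Y)`. -/
def rho (x : M) (X Y : EV n) : ℝ := ⟪a.J x (a.RicP x X), Y⟫_ℝ

/-- The `2`-form `∇_V Ω`, i.e. `(∇_V Ω)(Y,Z) = g((∇_V J)Y, Z)`. -/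
def covOmega (x : M) (V Y Z : EV n) : ℝ := ⟪a.covJ x V Y, Z⟫_ℝ

/-- `|∇Ω|² = Σ_k |∇_{X_k} Ω|²`. -/
def covOmegaNormSq (x : M) : ℝ := ∑ k, fnormSq (a.covOmega x (fr n k))

/-- The Bochner Laplacian `∇*∇J = −∇²_{X_k, X^k} J`, applied to `X`. -/
def bochnerJ (x : M) (X : EV n) : EV n := -∑ k, a.cov2J x (fr n k) (fr n k) X

/-- The `2`-form `∇*∇Ω`, i.e. `(∇*∇Ω)(Y,Z) = g((∇*∇J)Y, Z)`. -/
def bochnerOmega (x : M) (Y Z : EV n) : ℝ := ⟪a.bochnerJ x Y, Z⟫_ℝ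

/-- The vector-valued `2`-form `v(X,Y) = (∇_X J)Y − (∇_Y J)X`. -/
def vphi (x : M) (X Y : EV n) : EV n := a.covJ x X Y - a.covJ x Y X

/-- The commutator `[∇_X Ric, J]`, applied to `W`. -/
def covRicBr (x : M) (X W : EV n) : EV n :=
  a.covRic x X (a.J x W) - a.J x (a.covRic x X W)

/-- The vector-valued `2`-form
`ψ(X,Y) = ⅛([∇_X Ric, J]Y − [∇_Y Ric, J]X − [∇_{JX} Ric, J]JY + [∇_{JY} Ric, J]JX)`. -/
def psi (x : M) (X Y : EV n) : EV n :=
  (8:ℝ)⁻¹ • (a.covRicBr x X Y - a.covRicBr x Y X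
    - a.covRicBr x (a.J x X) (a.J x Y) + a.covRicBr x (a.J x Y) (a.J x X))

/-- `⟨v, ψ⟩ = ½ g(v(X^k, X^l), ψ(X_k, X_l))`. -/
def vpsi (x : M) : ℝ :=
  (2:ℝ)⁻¹ * ∑ k, ∑ l, ⟪a.vphi x (fr n k) (fr n l), a.psi x (fr n k) (fr n l)⟫_ℝ

/-- The function `q(J) = g((∇²_{X_k, X_l} Ric)JX^k, JX^l)`. -/
def qJ (x : M) : ℝ :=
  ∑ k, ∑ l, ⟪a.cov2Ric x (fr n k) (fr n l) (a.J x (fr n k)), a.J x (fr n l)⟫_ℝ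

/-- The number `Q(J) = ∫_M q(J) ω`. -/
def QJ : ℝ := ∫ x, a.qJ x ∂a.vol

/-- The vector field `V₂ = g(Ric(X^l), (J ∘ ∇_{X_l} J)X^k) · X_k`. -/
def V2 (x : M) : EV n :=
  ∑ k, (∑ l, ⟪a.Ric x (fr n l), a.J x (a.covJ x (fr n l) (fr n k))⟫_ℝ) • fr n k

/-- Semi-positivity (`A ≥ 0`) of an endomorphism field. -/
def SemiPos (A : M → EV n → EV n) : Prop := ∀ x X, 0 ≤ ⟪A x X, X⟫_ℝ

/-- Semi-negativity (`A ≤ 0`) of an endomorphism field. -/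
def SemiNeg (A : M → EV n → EV n) : Prop := ∀ x X, ⟪A x X, X⟫_ℝ ≤ 0

/-- `(M, g, J)` is Kähler: `∇J = 0`. -/
def IsKahler : Prop := ∀ x X Y, a.covJ x X Y = 0

/-- `(M, g, J)` is Einstein: `Ric = (S/n) · id`. -/
def IsEinstein : Prop := ∀ x X, a.Ric x X = (a.S x / (n : ℝ)) • X

end AKManifold

namespace AKManifold

section Aux
variable {n : ℕ} {M : Type} [TopologicalSpace M] [MeasurableSpace M]

lemma par (u v : EV n) : ⟪u, v⟫_ℝ = ∑ m, ⟪u, fr n m⟫_ℝ * ⟪v, fr n m⟫_ℝ := by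
  simp [fr, EuclideanSpace.inner_single_right, PiLp.inner_apply, RCLike.inner_apply]
  exact Finset.sum_congr rfl fun _ _ => mul_comm _ _

lemma extfr {u v : EV n} (h : ∀ m, ⟪u, fr n m⟫_ℝ = ⟪v, fr n m⟫_ℝ) : u = v := by
  ext m; have := h m; simpa [fr, EuclideanSpace.inner_single_right] using this

variable (a : AKManifold n M) (x : M)

lemma Jadj (u v : EV n) : ⟪a.J x u, v⟫_ℝ = -⟪u, a.J x v⟫_ℝ := by
  have h := a.J_isom x u (a.J x v)
  rw [a.J_sq, inner_neg_right] at h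
  linarith

lemma Jsub (u v : EV n) : a.J x (u - v) = a.J x u - a.J x v := by
  apply extfr; intro m
  rw [Jadj, inner_sub_left, inner_sub_left]
  have h1 := Jadj a x u (fr n m)
  have h2 := Jadj a x v (fr n m)
  linarith

lemma F1 (V Y Z : EV n) :
    ⟪a.covJ x V Y, Z⟫_ℝ = ⟪V, a.covJ x Z Y⟫_ℝ - ⟪V, a.covJ x Y Z⟫_ℝ := by
  have h := a.omega_closed x V Y Z
  have h2 := a.covJ_skew x Z V Y
  have h3 : ⟪a.covJ x Y Z, V⟫_ℝ = ⟪V, a.covJ x Y Z⟫_ℝ := real_inner_comm _ _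
  linarith

lemma F4 (V Y Z : EV n) :
    ⟪a.covJ x V (a.J x Y), Z⟫_ℝ = ⟪a.covJ x V Y, a.J x Z⟫_ℝ := by
  have h : a.covJ x V (a.J x Y) = -(a.J x (a.covJ x V Y)) :=
    eq_neg_of_add_eq_zero_left (a.covJ_antiJ x V Y)
  rw [h, inner_neg_left, Jadj]; ring

lemma Rsym (X Y : EV n) : ⟪a.Ric x X, Y⟫_ℝ = ⟪a.Ric x Y, X⟫_ℝ := by
  simp only [AKManifold.Ric]
  rw [sum_inner, sum_inner]
  refine Finset.sum_congr rfl fun l _ => ?_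
  have p1 := a.R_pair x X (fr n l) (fr n l) Y
  have p2 := a.R_pair x Y (fr n l) (fr n l) X
  have hb0 := a.R_bianchi x (fr n l) X Y
  have hb : ⟪a.R x (fr n l) X Y, fr n l⟫_ℝ + ⟪a.R x X Y (fr n l), fr n l⟫_ℝ
      + ⟪a.R x Y (fr n l) X, fr n l⟫_ℝ = 0 := by
    have := congrArg (fun v => ⟪v, fr n l⟫_ℝ) hb0
    simpa [inner_add_left] using this
  have hz := a.R_skewadj x X Y (fr n l) (fr n l)
  have ha : a.R x Y (fr n l) X = -(a.R x (fr n l) Y X) := a.R_antisym x (fr n l) Y X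
  rw [ha, inner_neg_left] at hb
  rw [p1, p2]
  linarith

end Aux

/-- Auxiliary: the vector `w(p,q) = (∇_{X_q}J)X_p − (∇_{X_p}J)X_q`. -/
def wv {n : ℕ} {M : Type} [TopologicalSpace M] [MeasurableSpace M]
    (a : AKManifold n M) (x : M) (p q : Fin n) : EV n :=
  a.covJ x (fr n q) (fr n p) - a.covJ x (fr n p) (fr n q)

/-- Auxiliary: the vector `z(p,q) = (∇_{JX_q}J)X_p − (∇_{X_p}J)JX_q`. -/
def zv {n : ℕ} {M : Type} [TopologicalSpace M] [MeasurableSpace M]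
    (a : AKManifold n M) (x : M) (p q : Fin n) : EV n :=
  a.covJ x (a.J x (fr n q)) (fr n p) - a.covJ x (fr n p) (a.J x (fr n q))

section Aux2
variable {n : ℕ} {M : Type} [TopologicalSpace M] [MeasurableSpace M]
variable (a : AKManifold n M) (x : M)

lemma h1 (V : EV n) (p q : Fin n) :
    ⟪a.covJ x V (fr n p), fr n q⟫_ℝ = ⟪V, wv a x p q⟫_ℝ := by
  rw [F1]; simp only [wv, inner_sub_right]

lemma zw (p q : Fin n) : zv a x p q = -(a.J x (wv a x p q)) := by
  have e2 : a.covJ x (a.J x (fr n q)) (fr n p) = a.covJ x (fr n q) (a.J x (fr n p)) :=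
    a.quasiKahler x _ _
  have e3 : a.covJ x (fr n q) (a.J x (fr n p)) = -(a.J x (a.covJ x (fr n q) (fr n p))) :=
    eq_neg_of_add_eq_zero_left (a.covJ_antiJ x _ _)
  have e4 : a.covJ x (fr n p) (a.J x (fr n q)) = -(a.J x (a.covJ x (fr n p) (fr n q))) :=
    eq_neg_of_add_eq_zero_left (a.covJ_antiJ x _ _)
  simp only [zv, wv, e2, e3, e4, Jsub a x]
  abel

lemma h2 (p q m : Fin n) :
    ⟪a.J x (wv a x p q), fr n m⟫_ℝ = ⟪a.J x (fr n p), a.covJ x (fr n m) (fr n q)⟫_ℝ := by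
  rw [Jadj]
  simp only [wv, inner_sub_left]
  have t1 : ⟪a.covJ x (fr n q) (fr n p), a.J x (fr n m)⟫_ℝ
      = -⟪a.J x (fr n p), a.covJ x (fr n q) (fr n m)⟫_ℝ := by
    rw [← F4 a x (fr n q) (fr n p) (fr n m)]
    exact a.covJ_skew x (fr n q) (a.J x (fr n p)) (fr n m)
  have t2 : ⟪a.covJ x (fr n p) (fr n q), a.J x (fr n m)⟫_ℝ
      = ⟪a.J x (fr n p), a.covJ x (fr n m) (fr n q)⟫_ℝ
        - ⟪a.J x (fr n p), a.covJ x (fr n q) (fr n m)⟫_ℝ := by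
    rw [← F4 a x (fr n p) (fr n q) (fr n m), ← a.quasiKahler x (fr n p) (fr n q)]
    exact F1 a x (a.J x (fr n p)) (fr n q) (fr n m)
  rw [t1, t2]; ring

lemma h3 (p q m : Fin n) :
    ⟪wv a x p q, fr n m⟫_ℝ = -⟪fr n p, a.covJ x (fr n m) (fr n q)⟫_ℝ := by
  rw [real_inner_comm, ← h1 a x (fr n m) p q]
  exact a.covJ_skew x (fr n m) (fr n p) (fr n q)

lemma hsumk (v : EV n) :
    ∑ k, ⟪a.Ric x (fr n k), v⟫_ℝ * ⟪fr n k, v⟫_ℝ = ⟪a.Ric x v, v⟫_ℝ := by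
  rw [par (a.Ric x v) v]
  refine Finset.sum_congr rfl fun k _ => ?_
  rw [Rsym a x v (fr n k), real_inner_comm v (fr n k)]

lemma hsumk2 (v : EV n) :
    ∑ k, ⟪a.Ric x (a.J x (fr n k)), a.J x v⟫_ℝ * ⟪fr n k, v⟫_ℝ
      = ⟪a.Ric x (a.J x v), a.J x v⟫_ℝ := by
  have key : ∀ k, ⟪a.Ric x (a.J x (fr n k)), a.J x v⟫_ℝ
      = -⟪a.J x (a.Ric x (a.J x v)), fr n k⟫_ℝ := by
    intro k
    rw [Rsym]
    have := Jadj a x (a.Ric x (a.J x v)) (fr n k)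
    linarith
  calc ∑ k, ⟪a.Ric x (a.J x (fr n k)), a.J x v⟫_ℝ * ⟪fr n k, v⟫_ℝ
      = ∑ k, -(⟪a.J x (a.Ric x (a.J x v)), fr n k⟫_ℝ * ⟪v, fr n k⟫_ℝ) := by
        refine Finset.sum_congr rfl fun k _ => ?_
        rw [key k, real_inner_comm (fr n k) v]; ring
    _ = -⟪a.J x (a.Ric x (a.J x v)), v⟫_ℝ := by
        rw [Finset.sum_neg_distrib, ← par]
    _ = ⟪a.Ric x (a.J x v), a.J x v⟫_ℝ := by
        have := Jadj a x (a.Ric x (a.J x v)) v; linarith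

lemma hQ (v : EV n) : ⟪a.Ric x v, v⟫_ℝ
    = ∑ m, ∑ m', (⟪a.Ric x (fr n m), fr n m'⟫_ℝ * ⟪v, fr n m'⟫_ℝ) * ⟪v, fr n m⟫_ℝ := by
  rw [par (a.Ric x v) v]
  refine Finset.sum_congr rfl fun m _ => ?_
  rw [Rsym a x v (fr n m), par (a.Ric x (fr n m)) v, Finset.sum_mul]

lemma jpair (u u' : EV n) :
    ∑ p, ⟪a.J x (fr n p), u⟫_ℝ * ⟪a.J x (fr n p), u'⟫_ℝ
      = ∑ p, ⟪fr n p, u⟫_ℝ * ⟪fr n p, u'⟫_ℝ := by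
  calc ∑ p, ⟪a.J x (fr n p), u⟫_ℝ * ⟪a.J x (fr n p), u'⟫_ℝ
      = ∑ p, ⟪a.J x u, fr n p⟫_ℝ * ⟪a.J x u', fr n p⟫_ℝ := by
        refine Finset.sum_congr rfl fun p _ => ?_
        rw [Jadj a x (fr n p) u, Jadj a x (fr n p) u',
          real_inner_comm (fr n p) (a.J x u), real_inner_comm (fr n p) (a.J x u')]
        ring
    _ = ⟪a.J x u, a.J x u'⟫_ℝ := (par _ _).symm
    _ = ⟪u, u'⟫_ℝ := a.J_isom x u u'
    _ = ∑ p, ⟪fr n p, u⟫_ℝ * ⟪fr n p, u'⟫_ℝ := by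
        rw [par u u']
        exact Finset.sum_congr rfl fun p _ => by
          rw [real_inner_comm u (fr n p), real_inner_comm u' (fr n p)]

lemma Elem (q : Fin n) :
    ∑ p, ⟪a.Ric x (a.J x (wv a x p q)), a.J x (wv a x p q)⟫_ℝ
      = ∑ p, ⟪a.Ric x (wv a x p q), wv a x p q⟫_ℝ := by
  calc ∑ p, ⟪a.Ric x (a.J x (wv a x p q)), a.J x (wv a x p q)⟫_ℝ
      = ∑ p, ∑ m, ∑ m', (⟪a.Ric x (fr n m), fr n m'⟫_ℝ
          * ⟪a.J x (fr n p), a.covJ x (fr n m') (fr n q)⟫_ℝ)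
          * ⟪a.J x (fr n p), a.covJ x (fr n m) (fr n q)⟫_ℝ := by
        refine Finset.sum_congr rfl fun p _ => ?_
        rw [hQ]; simp only [h2]
    _ = ∑ m, ∑ m', ∑ p, (⟪a.Ric x (fr n m), fr n m'⟫_ℝ
          * ⟪a.J x (fr n p), a.covJ x (fr n m') (fr n q)⟫_ℝ)
          * ⟪a.J x (fr n p), a.covJ x (fr n m) (fr n q)⟫_ℝ := by
        rw [Finset.sum_comm]
        exact Finset.sum_congr rfl fun m _ => Finset.sum_comm
    _ = ∑ m, ∑ m', ⟪a.Ric x (fr n m), fr n m'⟫_ℝ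
          * ∑ p, ⟪a.J x (fr n p), a.covJ x (fr n m') (fr n q)⟫_ℝ
          * ⟪a.J x (fr n p), a.covJ x (fr n m) (fr n q)⟫_ℝ := by
        refine Finset.sum_congr rfl fun m _ => Finset.sum_congr rfl fun m' _ => ?_
        rw [Finset.mul_sum]
        exact Finset.sum_congr rfl fun p _ => by ring
    _ = ∑ m, ∑ m', ⟪a.Ric x (fr n m), fr n m'⟫_ℝ
          * ∑ p, ⟪fr n p, a.covJ x (fr n m') (fr n q)⟫_ℝ
          * ⟪fr n p, a.covJ x (fr n m) (fr n q)⟫_ℝ := by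
        refine Finset.sum_congr rfl fun m _ => Finset.sum_congr rfl fun m' _ => ?_
        rw [jpair]
    _ = ∑ m, ∑ m', ∑ p, (⟪a.Ric x (fr n m), fr n m'⟫_ℝ * -⟪fr n p, a.covJ x (fr n m') (fr n q)⟫_ℝ)
          * -⟪fr n p, a.covJ x (fr n m) (fr n q)⟫_ℝ := by
        refine Finset.sum_congr rfl fun m _ => Finset.sum_congr rfl fun m' _ => ?_
        rw [Finset.mul_sum]
        exact Finset.sum_congr rfl fun p _ => by ring
    _ = ∑ p, ∑ m, ∑ m', (⟪a.Ric x (fr n m), fr n m'⟫_ℝ * -⟪fr n p, a.covJ x (fr n m') (fr n q)⟫_ℝ)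
          * -⟪fr n p, a.covJ x (fr n m) (fr n q)⟫_ℝ := by
        refine Eq.symm ?_
        rw [Finset.sum_comm]
        exact Finset.sum_congr rfl fun m _ => Finset.sum_comm
    _ = ∑ p, ⟪a.Ric x (wv a x p q), wv a x p q⟫_ℝ := by
        refine Finset.sum_congr rfl fun p _ => ?_
        rw [hQ]; simp only [h3]

lemma hrho (k l : Fin n) : a.rho x (fr n k) (fr n l)
    = (2:ℝ)⁻¹ * (⟪a.J x (a.Ric x (fr n k)), fr n l⟫_ℝ + ⟪a.Ric x (a.J x (fr n k)), fr n l⟫_ℝ) := by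
  simp only [AKManifold.rho, AKManifold.RicP]
  rw [Jadj, real_inner_smul_left, inner_sub_left]
  have hh2 := Jadj a x (a.Ric x (fr n k)) (fr n l)
  have hh3 : ⟪a.J x (a.Ric x (a.J x (fr n k))), a.J x (fr n l)⟫_ℝ
      = ⟪a.Ric x (a.J x (fr n k)), fr n l⟫_ℝ := a.J_isom x _ _
  rw [hh3]
  linarith

lemma hphi (k l : Fin n) : a.phi x (fr n k) (fr n l)
    = -(2:ℝ)⁻¹ * ∑ p, ⟪a.covJ x (fr n l) (a.J x (fr n p)), a.covJ x (fr n k) (fr n p)⟫_ℝ := by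
  simp only [AKManifold.phi]
  have hterm : ∀ p : Fin n,
      ⟪a.covJ x (fr n k) (a.covJ x (a.J x (fr n l)) (fr n p)), fr n p⟫_ℝ
        = -⟪a.covJ x (fr n l) (a.J x (fr n p)), a.covJ x (fr n k) (fr n p)⟫_ℝ := by
    intro p
    rw [a.quasiKahler x (fr n l) (fr n p)]
    exact a.covJ_skew x (fr n k) _ _
  rw [Finset.sum_congr rfl fun p _ => hterm p, Finset.sum_neg_distrib]
  ring

lemma hc (k l p : Fin n) :
    ⟪a.covJ x (fr n l) (a.J x (fr n p)), a.covJ x (fr n k) (fr n p)⟫_ℝ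
      = ∑ q, ⟪zv a x p q, fr n l⟫_ℝ * ⟪fr n k, wv a x p q⟫_ℝ := by
  rw [par (a.covJ x (fr n l) (a.J x (fr n p))) (a.covJ x (fr n k) (fr n p))]
  refine Finset.sum_congr rfl fun q _ => ?_
  congr 1
  · rw [F4 a x (fr n l) (fr n p) (fr n q), F1 a x (fr n l) (fr n p) (a.J x (fr n q)),
      real_inner_comm (fr n l) (zv a x p q)]
    simp only [zv, inner_sub_right]
  · exact h1 a x (fr n k) p q

lemma hinner_l (k p q : Fin n) :
    ∑ l, (⟪a.J x (a.Ric x (fr n k)), fr n l⟫_ℝ + ⟪a.Ric x (a.J x (fr n k)), fr n l⟫_ℝ)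
        * ⟪zv a x p q, fr n l⟫_ℝ
      = -(⟪a.Ric x (fr n k), wv a x p q⟫_ℝ
          + ⟪a.Ric x (a.J x (fr n k)), a.J x (wv a x p q)⟫_ℝ) := by
  calc ∑ l, (⟪a.J x (a.Ric x (fr n k)), fr n l⟫_ℝ + ⟪a.Ric x (a.J x (fr n k)), fr n l⟫_ℝ)
        * ⟪zv a x p q, fr n l⟫_ℝ
      = ⟪a.J x (a.Ric x (fr n k)), zv a x p q⟫_ℝ + ⟪a.Ric x (a.J x (fr n k)), zv a x p q⟫_ℝ := by
        simp only [add_mul]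
        rw [Finset.sum_add_distrib, ← par, ← par]
    _ = -(⟪a.Ric x (fr n k), wv a x p q⟫_ℝ
          + ⟪a.Ric x (a.J x (fr n k)), a.J x (wv a x p q)⟫_ℝ) := by
        rw [zw a x p q, inner_neg_right, inner_neg_right, a.J_isom x]
        ring

lemma hk (k : Fin n) :
    ∑ l, a.rho x (fr n k) (fr n l) * a.phi x (fr n k) (fr n l)
      = (4:ℝ)⁻¹ * ∑ p, ∑ q,
          (⟪a.Ric x (fr n k), wv a x p q⟫_ℝ
            + ⟪a.Ric x (a.J x (fr n k)), a.J x (wv a x p q)⟫_ℝ) * ⟪fr n k, wv a x p q⟫_ℝ := by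
  calc ∑ l, a.rho x (fr n k) (fr n l) * a.phi x (fr n k) (fr n l)
      = ∑ l, -(4:ℝ)⁻¹ * ((⟪a.J x (a.Ric x (fr n k)), fr n l⟫_ℝ
          + ⟪a.Ric x (a.J x (fr n k)), fr n l⟫_ℝ)
          * ∑ p, ⟪a.covJ x (fr n l) (a.J x (fr n p)), a.covJ x (fr n k) (fr n p)⟫_ℝ) := by
        refine Finset.sum_congr rfl fun l _ => ?_
        rw [hrho a x k l, hphi a x k l]; ring
    _ = -(4:ℝ)⁻¹ * ∑ l, ∑ p, (⟪a.J x (a.Ric x (fr n k)), fr n l⟫_ℝ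
          + ⟪a.Ric x (a.J x (fr n k)), fr n l⟫_ℝ)
          * ⟪a.covJ x (fr n l) (a.J x (fr n p)), a.covJ x (fr n k) (fr n p)⟫_ℝ := by
        rw [← Finset.mul_sum]
        congr 1
        exact Finset.sum_congr rfl fun l _ => by rw [Finset.mul_sum]
    _ = -(4:ℝ)⁻¹ * ∑ p, ∑ l, (⟪a.J x (a.Ric x (fr n k)), fr n l⟫_ℝ
          + ⟪a.Ric x (a.J x (fr n k)), fr n l⟫_ℝ)
          * ⟪a.covJ x (fr n l) (a.J x (fr n p)), a.covJ x (fr n k) (fr n p)⟫_ℝ := by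
        congr 1
        exact Finset.sum_comm
    _ = -(4:ℝ)⁻¹ * ∑ p, ∑ l, ∑ q, (⟪a.J x (a.Ric x (fr n k)), fr n l⟫_ℝ
          + ⟪a.Ric x (a.J x (fr n k)), fr n l⟫_ℝ)
          * (⟪zv a x p q, fr n l⟫_ℝ * ⟪fr n k, wv a x p q⟫_ℝ) := by
        congr 1
        refine Finset.sum_congr rfl fun p _ => Finset.sum_congr rfl fun l _ => ?_
        rw [hc a x k l p, Finset.mul_sum]
    _ = -(4:ℝ)⁻¹ * ∑ p, ∑ q, ∑ l, (⟪a.J x (a.Ric x (fr n k)), fr n l⟫_ℝ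
          + ⟪a.Ric x (a.J x (fr n k)), fr n l⟫_ℝ)
          * (⟪zv a x p q, fr n l⟫_ℝ * ⟪fr n k, wv a x p q⟫_ℝ) := by
        congr 1
        exact Finset.sum_congr rfl fun p _ => Finset.sum_comm
    _ = -(4:ℝ)⁻¹ * ∑ p, ∑ q, (∑ l, (⟪a.J x (a.Ric x (fr n k)), fr n l⟫_ℝ
          + ⟪a.Ric x (a.J x (fr n k)), fr n l⟫_ℝ) * ⟪zv a x p q, fr n l⟫_ℝ)
          * ⟪fr n k, wv a x p q⟫_ℝ := by
        congr 1
        refine Finset.sum_congr rfl fun p _ => Finset.sum_congr rfl fun q _ => ?_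
        rw [Finset.sum_mul]
        exact Finset.sum_congr rfl fun l _ => by ring
    _ = -(4:ℝ)⁻¹ * ∑ p, ∑ q, (-(⟪a.Ric x (fr n k), wv a x p q⟫_ℝ
          + ⟪a.Ric x (a.J x (fr n k)), a.J x (wv a x p q)⟫_ℝ)) * ⟪fr n k, wv a x p q⟫_ℝ := by
        congr 1
        refine Finset.sum_congr rfl fun p _ => Finset.sum_congr rfl fun q _ => ?_
        rw [hinner_l a x k p q]
    _ = (4:ℝ)⁻¹ * ∑ p, ∑ q,
          (⟪a.Ric x (fr n k), wv a x p q⟫_ℝ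
            + ⟪a.Ric x (a.J x (fr n k)), a.J x (wv a x p q)⟫_ℝ) * ⟪fr n k, wv a x p q⟫_ℝ := by
        simp only [neg_mul, Finset.sum_neg_distrib]
        ring

end Aux2

end AKManifold

open AKManifold in
/-- For any almost Kähler manifold `(M,g,J)`:
`2⟨ρ, φ⟩ = ⟨∇_{Ric(X_k)} Ω, ∇_{X^k} Ω⟩` (summation over `k`). -/
theorem stmt0 {n : ℕ} {M : Type} [TopologicalSpace M] [MeasurableSpace M]
    (a : AKManifold n M) (x : M) :
    2 * finner (a.rho x) (a.phi x)
      = ∑ k, finner (a.covOmega x (a.Ric x (fr n k))) (a.covOmega x (fr n k)) := by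
  have hRHS : (∑ k, finner (a.covOmega x (a.Ric x (fr n k))) (a.covOmega x (fr n k)))
      = (2:ℝ)⁻¹ * ∑ p, ∑ q, ⟪a.Ric x (wv a x p q), wv a x p q⟫_ℝ := by
    simp only [finner, covOmega]
    rw [← Finset.mul_sum]
    congr 1
    rw [Finset.sum_comm]
    refine Finset.sum_congr rfl fun p _ => ?_
    rw [Finset.sum_comm]
    refine Finset.sum_congr rfl fun q _ => ?_
    rw [← hsumk a x (wv a x p q)]
    refine Finset.sum_congr rfl fun k _ => ?_
    rw [h1 a x (a.Ric x (fr n k)) p q, h1 a x (fr n k) p q]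
  have hLHS : 2 * finner (a.rho x) (a.phi x)
      = (4:ℝ)⁻¹ * ∑ p, ∑ q, (⟪a.Ric x (wv a x p q), wv a x p q⟫_ℝ
          + ⟪a.Ric x (a.J x (wv a x p q)), a.J x (wv a x p q)⟫_ℝ) := by
    simp only [finner]
    calc 2 * ((2:ℝ)⁻¹ * ∑ k, ∑ l, a.rho x (fr n k) (fr n l) * a.phi x (fr n k) (fr n l))
        = ∑ k, ∑ l, a.rho x (fr n k) (fr n l) * a.phi x (fr n k) (fr n l) := by ring
      _ = ∑ k, (4:ℝ)⁻¹ * ∑ p, ∑ q,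
            (⟪a.Ric x (fr n k), wv a x p q⟫_ℝ
              + ⟪a.Ric x (a.J x (fr n k)), a.J x (wv a x p q)⟫_ℝ) * ⟪fr n k, wv a x p q⟫_ℝ :=
          Finset.sum_congr rfl fun k _ => hk a x k
      _ = (4:ℝ)⁻¹ * ∑ k, ∑ p, ∑ q,
            (⟪a.Ric x (fr n k), wv a x p q⟫_ℝ
              + ⟪a.Ric x (a.J x (fr n k)), a.J x (wv a x p q)⟫_ℝ) * ⟪fr n k, wv a x p q⟫_ℝ := by
          rw [← Finset.mul_sum]
      _ = (4:ℝ)⁻¹ * ∑ p, ∑ q, ∑ k,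
            (⟪a.Ric x (fr n k), wv a x p q⟫_ℝ
              + ⟪a.Ric x (a.J x (fr n k)), a.J x (wv a x p q)⟫_ℝ) * ⟪fr n k, wv a x p q⟫_ℝ := by
          congr 1
          rw [Finset.sum_comm]
          exact Finset.sum_congr rfl fun p _ => Finset.sum_comm
      _ = (4:ℝ)⁻¹ * ∑ p, ∑ q, (⟪a.Ric x (wv a x p q), wv a x p q⟫_ℝ
            + ⟪a.Ric x (a.J x (wv a x p q)), a.J x (wv a x p q)⟫_ℝ) := by
          congr 1
          refine Finset.sum_congr rfl fun p _ => Finset.sum_congr rfl fun q _ => ?_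
          simp only [add_mul]
          rw [Finset.sum_add_distrib, hsumk a x (wv a x p q), hsumk2 a x (wv a x p q)]
  have hE : ∑ p, ∑ q, ⟪a.Ric x (a.J x (wv a x p q)), a.J x (wv a x p q)⟫_ℝ
      = ∑ p, ∑ q, ⟪a.Ric x (wv a x p q), wv a x p q⟫_ℝ := by
    rw [Finset.sum_comm]
    refine Eq.symm ?_
    rw [Finset.sum_comm]
    exact Finset.sum_congr rfl fun q _ => (Elem a x q).symm
  rw [hLHS, hRHS]
  simp only [Finset.sum_add_distrib]
  rw [hE]
  ring
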